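/- Let D ≥ 1 and let W be a nonzero real m×n matrix that factors as W = A·B with A a real m×D matrix and B a real D×n matrix. Then for every α > 1, the α-Rényi entanglement entropy of W satisfies S_α(W) ≤ log D. -/

import Mathlib

open scoped BigOperators

/-- The singular values of a real matrix `A`: the nonnegative square roots of the
eigenvalues of the positive semidefinite matrix `Aᵀ * A`. -/
noncomputable def singularValues {m n : Type*} [Fintype m] [Fintype n] [DecidableEq n]
    (A : Matrix m n ℝ) : n → ℝ := fun i =>
  Real.sqrt ((show (A.transpose * A).IsHermitian by
    rw [← Matrix.conjTranspose_eq_transpose_of_trivial]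
    exact Matrix.isHermitian_conjTranspose_mul_self A).eigenvalues i)

/-- The Schatten `p`-norm `‖A‖_p = (Σ_i σ_i(A)^p)^{1/p}`. -/
noncomputable def schattenNorm (p : ℝ) {m n : Type*} [Fintype m] [Fintype n] [DecidableEq n]
    (A : Matrix m n ℝ) : ℝ :=
  (∑ i, singularValues A i ^ p) ^ (1 / p)

/-- The trace norm `‖A‖_1 = Σ_i σ_i(A)`. -/
noncomputable def traceNorm {m n : Type*} [Fintype m] [Fintype n] [DecidableEq n]
    (A : Matrix m n ℝ) : ℝ :=
  ∑ i, singularValues A i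

/-- The `p`-Rényi entanglement entropy
`S_p(A) = (1/(1-p)) log((Σ_i σ_i(A)^p)/(Σ_i σ_i(A))^p)`. -/
noncomputable def renyiEE (p : ℝ) {m n : Type*} [Fintype m] [Fintype n] [DecidableEq n]
    (A : Matrix m n ℝ) : ℝ :=
  (1 / (1 - p)) * Real.log ((∑ i, singularValues A i ^ p) / (∑ i, singularValues A i) ^ p)

lemma aux_rank_ne_zero {m n : ℕ} {W : Matrix (Fin m) (Fin n) ℝ} (h : W ≠ 0) :
    W.rank ≠ 0 := by
  intro h0
  apply h
  have hbot : LinearMap.range W.mulVecLin = ⊥ := Submodule.finrank_eq_zero.mp h0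
  have hz : ∀ v, W.mulVec v = 0 := by
    intro v
    have : W.mulVecLin v ∈ LinearMap.range W.mulVecLin := LinearMap.mem_range_self _ v
    rw [hbot, Submodule.mem_bot] at this
    simpa [Matrix.mulVecLin_apply] using this
  ext i j
  have := congrFun (hz (Pi.single j 1)) i
  simpa [Matrix.mulVec_single] using this

theorem renyiEE_le_log_of_factorization
    (m n D : ℕ) (hD : 1 ≤ D)
    (A : Matrix (Fin m) (Fin D) ℝ) (B : Matrix (Fin D) (Fin n) ℝ)
    (W : Matrix (Fin m) (Fin n) ℝ) (hW : W = A * B) (hW0 : W ≠ 0)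
    (α : ℝ) (hα : 1 < α) :
    renyiEE α W ≤ Real.log D := by
  classical
  have hH : (W.transpose * W).IsHermitian := by
    rw [← Matrix.conjTranspose_eq_transpose_of_trivial]
    exact Matrix.isHermitian_conjTranspose_mul_self W
  have hPSD : (W.transpose * W).PosSemidef := by
    rw [← Matrix.conjTranspose_eq_transpose_of_trivial]
    exact Matrix.posSemidef_conjTranspose_mul_self W
  set σ : Fin n → ℝ := singularValues W with hσdef
  have hσ : ∀ i, σ i = Real.sqrt (hH.eigenvalues i) := fun i => rfl
  have hev : ∀ i, 0 ≤ hH.eigenvalues i := fun i => hPSD.eigenvalues_nonneg i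
  have hσ0 : ∀ i, 0 ≤ σ i := fun i => (hσ i) ▸ Real.sqrt_nonneg _
  have hσne : ∀ i, σ i ≠ 0 ↔ hH.eigenvalues i ≠ 0 := by
    intro i
    rw [hσ i]
    constructor
    · intro h h0; exact h (by rw [h0, Real.sqrt_zero])
    · intro h h0; exact h ((Real.sqrt_eq_zero (hev i)).mp h0)
  set s : Finset (Fin n) := Finset.univ.filter (fun i => σ i ≠ 0) with hs
  -- card bounds
  have hcard_eq : s.card = W.rank := by
    have h1 : (W.transpose * W).rank = Fintype.card {i // hH.eigenvalues i ≠ 0} :=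
      hH.rank_eq_card_non_zero_eigs
    have h2 : Fintype.card {i // hH.eigenvalues i ≠ 0} =
        (Finset.univ.filter (fun i => hH.eigenvalues i ≠ 0)).card :=
      Fintype.card_subtype _
    have h3 : s = Finset.univ.filter (fun i => hH.eigenvalues i ≠ 0) := by
      apply Finset.filter_congr
      intro i _
      simpa using hσne i
    rw [h3, ← h2, ← h1, Matrix.rank_transpose_mul_self]
  have hrankD : W.rank ≤ D := by
    calc W.rank = (A * B).rank := by rw [hW]
    _ ≤ A.rank := Matrix.rank_mul_le_left A B
    _ ≤ Fintype.card (Fin D) := Matrix.rank_le_card_width A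
    _ = D := Fintype.card_fin D
  have hcardD : s.card ≤ D := hcard_eq ▸ hrankD
  have hcard1 : 1 ≤ s.card := by
    rw [hcard_eq]
    exact Nat.one_le_iff_ne_zero.mpr (aux_rank_ne_zero hW0)
  have hsne : s.Nonempty := Finset.card_pos.mp hcard1
  set c : ℝ := (s.card : ℝ) with hc
  have hcpos : 0 < c := by
    simpa [hc] using (Nat.cast_pos (α := ℝ)).mpr (lt_of_lt_of_le Nat.zero_lt_one hcard1)
  have hcD : c ≤ (D : ℝ) := by rw [hc]; exact_mod_cast hcardD
  have hDpos : (0 : ℝ) < (D : ℝ) := by exact_mod_cast lt_of_lt_of_le Nat.zero_lt_one hD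
  -- sums restrict to s
  set T : ℝ := ∑ i ∈ s, σ i with hT
  have hTuniv : ∑ i, σ i = T := by
    refine (Finset.sum_subset s.subset_univ ?_).symm
    intro i _ hi
    by_contra h
    exact hi (Finset.mem_filter.mpr ⟨Finset.mem_univ i, h⟩)
  have hαne : α ≠ 0 := by positivity
  have hPuniv : ∑ i, σ i ^ α = ∑ i ∈ s, σ i ^ α := by
    refine (Finset.sum_subset s.subset_univ ?_).symm
    intro i _ hi
    have : σ i = 0 := by
      by_contra h
      exact hi (Finset.mem_filter.mpr ⟨Finset.mem_univ i, h⟩)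
    rw [this, Real.zero_rpow hαne]
  have hTpos : 0 < T := by
    refine Finset.sum_pos ?_ hsne
    intro i hi
    exact lt_of_le_of_ne (hσ0 i) (Ne.symm (Finset.mem_filter.mp hi).2)
  -- Jensen / power mean inequality
  have hJ := Real.rpow_arith_mean_le_arith_mean_rpow s (fun _ => c⁻¹) σ
    (fun i _ => by positivity) (by
      simp only [Finset.sum_const, nsmul_eq_mul]
      exact mul_inv_cancel₀ (ne_of_gt hcpos))
    (fun i _ => hσ0 i) (le_of_lt hα)
  have hL : ∑ i ∈ s, c⁻¹ * σ i = c⁻¹ * T := by rw [hT, Finset.mul_sum]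
  have hR : ∑ i ∈ s, c⁻¹ * σ i ^ α = c⁻¹ * ∑ i ∈ s, σ i ^ α := by rw [Finset.mul_sum]
  rw [hL, hR] at hJ
  have hJ' : (c⁻¹) ^ α * T ^ α ≤ c⁻¹ * ∑ i ∈ s, σ i ^ α := by
    rwa [Real.mul_rpow (by positivity) (le_of_lt hTpos)] at hJ
  have hkey : c ^ (1 - α) * T ^ α ≤ ∑ i ∈ s, σ i ^ α := by
    have h1 : c * ((c⁻¹) ^ α * T ^ α) ≤ c * (c⁻¹ * ∑ i ∈ s, σ i ^ α) :=
      mul_le_mul_of_nonneg_left hJ' (le_of_lt hcpos)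
    have h2 : c * (c⁻¹ * ∑ i ∈ s, σ i ^ α) = ∑ i ∈ s, σ i ^ α := by
      rw [← mul_assoc, mul_inv_cancel₀ (ne_of_gt hcpos), one_mul]
    have h3 : c * ((c⁻¹) ^ α * T ^ α) = c ^ (1 - α) * T ^ α := by
      rw [Real.inv_rpow (le_of_lt hcpos), ← Real.rpow_neg (le_of_lt hcpos),
        show (1 - α) = 1 + (-α) by ring, Real.rpow_add hcpos, Real.rpow_one]
      ring
    rw [h3, h2] at h1
    exact h1
  have hkeyD : (D : ℝ) ^ (1 - α) * T ^ α ≤ ∑ i, σ i ^ α := by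
    rw [hPuniv]
    refine le_trans (mul_le_mul_of_nonneg_right ?_ (by positivity)) hkey
    exact Real.rpow_le_rpow_of_nonpos hcpos hcD (by linarith)
  -- conclude
  have hTα : (0 : ℝ) < T ^ α := Real.rpow_pos_of_pos hTpos α
  have hRge : (D : ℝ) ^ (1 - α) ≤ (∑ i, σ i ^ α) / (∑ i, σ i) ^ α := by
    rw [hTuniv, le_div_iff₀ hTα]
    exact hkeyD
  have hlog : (1 - α) * Real.log D ≤
      Real.log ((∑ i, σ i ^ α) / (∑ i, σ i) ^ α) := by
    rw [← Real.log_rpow hDpos]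
    exact Real.log_le_log (Real.rpow_pos_of_pos hDpos _) hRge
  have hcoef : (1 : ℝ) / (1 - α) ≤ 0 := by
    apply div_nonpos_of_nonneg_of_nonpos <;> linarith
  have := mul_le_mul_of_nonpos_left hlog hcoef
  calc renyiEE α W
      = (1 / (1 - α)) * Real.log ((∑ i, σ i ^ α) / (∑ i, σ i) ^ α) := rfl
    _ ≤ (1 / (1 - α)) * ((1 - α) * Real.log D) := this
    _ = Real.log D := by
        rw [one_div]
        exact inv_mul_cancel_left₀ (by linarith : (1:ℝ) - α ≠ 0) _
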